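/- Let H be a Hopf algebra over a field K and A = T(V)/(I) a quadratic algebra that is an H-module algebra with V an H-submodule and I ⊆ V ⊗ V an H-submodule. Give V* the contragredient H-action. If for all h ∈ H and all φ, ψ ∈ V* one has ∑_{(h)} (h_{(2)}·φ)(h_{(1)}·ψ) = ∑_{(h)} (h_{(1)}·φ)(h_{(2)}·ψ) in V* ⊗ V*, then the orthogonal complement I^⊥ = {f ∈ V* ⊗ V* : f(r) = 0 for all r ∈ I} is an H-submodule of V* ⊗ V*; in particular the Koszul dual A^! = T(V*)/(I^⊥) is an H-module algebra. -/

import Mathlib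

open TensorProduct Coalgebra

suppress_compilation

namespace KoszulAux

variable (K : Type*) [Field K] (H : Type*) [Ring H] [HopfAlgebra K H]

/-- Convolution product on `Hom(H, H ⊗ H)`. -/
def conv (f g : H →ₗ[K] H ⊗[K] H) : H →ₗ[K] H ⊗[K] H :=
  LinearMap.mul' K (H ⊗[K] H) ∘ₗ TensorProduct.map f g ∘ₗ Coalgebra.comul

variable {K H}

lemma conv_repr (f g : H →ₗ[K] H ⊗[K] H) {ι : Type*} (a : H) (r : Coalgebra.Repr K a ι) :
    conv K H f g a = ∑ i ∈ r.index, f (r.left i) * g (r.right i) := by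
  simp only [conv, LinearMap.coe_comp, Function.comp_apply, ← r.eq, map_sum,
    TensorProduct.map_tmul, LinearMap.mul'_apply]

/-- Convolution unit. -/
def cunit : H →ₗ[K] H ⊗[K] H :=
  Algebra.linearMap K (H ⊗[K] H) ∘ₗ Coalgebra.counit

lemma cunit_apply (a : H) :
    (cunit (K := K) (H := H)) a = Coalgebra.counit (R := K) a • (1 : H ⊗[K] H) := by
  simp [cunit, Algebra.algebraMap_eq_smul_one]

lemma conv_unit_right (f : H →ₗ[K] H ⊗[K] H) : conv K H f cunit = f := by
  ext a
  set r := ℛ K a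
  rw [conv_repr f cunit a r]
  have h1 : ∑ i ∈ r.index, Coalgebra.counit (R := K) (r.right i) • r.left i = a := by
    have h := Coalgebra.sum_tmul_counit_eq (R := K) r
    have h2 := congrArg (TensorProduct.rid K H) h
    simp only [map_sum, TensorProduct.rid_tmul] at h2
    simpa using h2
  calc ∑ i ∈ r.index, f (r.left i) * cunit (r.right i)
      = ∑ i ∈ r.index, f (Coalgebra.counit (R := K) (r.right i) • r.left i) := by
        refine Finset.sum_congr rfl fun i _ => ?_
        rw [cunit_apply, map_smul]
        rw [mul_smul_comm, mul_one]
    _ = f a := by rw [← map_sum, h1]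

lemma conv_unit_left (f : H →ₗ[K] H ⊗[K] H) : conv K H cunit f = f := by
  ext a
  set r := ℛ K a
  rw [conv_repr cunit f a r]
  have h1 : ∑ i ∈ r.index, Coalgebra.counit (R := K) (r.left i) • r.right i = a := by
    have h := Coalgebra.sum_counit_tmul_eq (R := K) r
    have h2 := congrArg (TensorProduct.lid K H) h
    simp only [map_sum, TensorProduct.lid_tmul] at h2
    simpa using h2
  calc ∑ i ∈ r.index, cunit (r.left i) * f (r.right i)
      = ∑ i ∈ r.index, f (Coalgebra.counit (R := K) (r.left i) • r.right i) := by
        refine Finset.sum_congr rfl fun i _ => ?_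
        rw [cunit_apply, map_smul]
        rw [smul_mul_assoc, one_mul]
    _ = f a := by rw [← map_sum, h1]

lemma conv_assoc (f g k : H →ₗ[K] H ⊗[K] H) :
    conv K H (conv K H f g) k = conv K H f (conv K H g k) := by
  ext a
  set r := ℛ K a
  set a₁ : (i : H × H) → Coalgebra.Repr K (r.left i) (H × H) := fun i => ℛ K (r.left i)
  set a₂ : (i : H × H) → Coalgebra.Repr K (r.right i) (H × H) := fun i => ℛ K (r.right i)
  have key := Coalgebra.sum_map_tmul_tmul_eq (f := f) (g := g) (h := k) (a := a)
    (repr := r) (a₁ := a₁) (a₂ := a₂)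
  -- apply x ⊗ (y ⊗ z) ↦ x * (y * z)
  set B := H ⊗[K] H
  let m3 : B ⊗[K] (B ⊗[K] B) →ₗ[K] B :=
    LinearMap.mul' K B ∘ₗ LinearMap.lTensor B (LinearMap.mul' K B)
  have key2 := congrArg m3 key
  simp only [map_sum, m3, LinearMap.coe_comp, Function.comp_apply,
    LinearMap.lTensor_tmul, LinearMap.mul'_apply] at key2
  rw [conv_repr _ k a r, conv_repr f _ a r]
  calc ∑ i ∈ r.index, conv K H f g (r.left i) * k (r.right i)
      = ∑ i ∈ r.index, ∑ j ∈ (a₁ i).index,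
          f ((a₁ i).left j) * (g ((a₁ i).right j) * k (r.right i)) := by
        refine Finset.sum_congr rfl fun i _ => ?_
        rw [conv_repr f g _ (a₁ i), Finset.sum_mul]
        exact Finset.sum_congr rfl fun j _ => (mul_assoc _ _ _)
    _ = ∑ i ∈ r.index, f (r.left i) * conv K H g k (r.right i) := by
        rw [← key2]
        refine Finset.sum_congr rfl fun i _ => ?_
        rw [conv_repr g k _ (a₂ i), Finset.mul_sum]

end KoszulAux

namespace KoszulAux

open HopfAlgebra

variable {K : Type*} [Field K] {H : Type*} [Ring H] [HopfAlgebra K H]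

/-- `τ ∘ (S ⊗ S) : H ⊗ H → H ⊗ H`. -/
def tauSS : H ⊗[K] H →ₗ[K] H ⊗[K] H :=
  (TensorProduct.comm K H H).toLinearMap ∘ₗ
    TensorProduct.map (antipode (R := K)) (antipode (R := K))

lemma tauSS_tmul (x y : H) :
    (tauSS (K := K)) (x ⊗ₜ[K] y) = antipode (R := K) y ⊗ₜ[K] antipode (R := K) x := rfl

lemma conv_deltaS_delta :
    conv K H (Coalgebra.comul ∘ₗ antipode (R := K)) Coalgebra.comul = cunit := by
  ext a
  set r := ℛ K a
  rw [conv_repr _ _ a r, cunit_apply]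
  calc ∑ i ∈ r.index,
        Coalgebra.comul (R := K) (antipode (R := K) (r.left i)) * Coalgebra.comul (r.right i)
      = Coalgebra.comul (R := K) (∑ i ∈ r.index, antipode (R := K) (r.left i) * r.right i) := by
        rw [map_sum]
        exact Finset.sum_congr rfl fun i _ => (Bialgebra.comul_mul _ _).symm
    _ = counit (R := K) a • 1 := by
        rw [HopfAlgebra.sum_antipode_mul_eq_algebraMap_counit r]
        simp [Algebra.algebraMap_eq_smul_one]

lemma conv_delta_tauSS :
    conv K H Coalgebra.comul ((tauSS (K := K)) ∘ₗ Coalgebra.comul) = cunit := by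
  ext a
  set B := H ⊗[K] H
  set r := ℛ K a
  set rL : (i : H × H) → Coalgebra.Repr K (r.left i) (H × H) := fun i => ℛ K (r.left i)
  set rR : (i : H × H) → Coalgebra.Repr K (r.right i) (H × H) := fun i => ℛ K (r.right i)
  set rY : (i : H × H) → (j : H × H) → Coalgebra.Repr K ((rR i).left j) (H × H) :=
    fun i j => ℛ K ((rR i).left j)
  set rY' : (i : H × H) → (j : H × H) → Coalgebra.Repr K ((rR i).right j) (H × H) :=
    fun i j => ℛ K ((rR i).right j)
  -- the four-fold contraction map
  let Q : H ⊗[K] (H ⊗[K] (H ⊗[K] H)) →ₗ[K] B :=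
    LinearMap.mul' K B ∘ₗ LinearMap.lTensor B (tauSS (K := K)) ∘ₗ
      (TensorProduct.assoc K H H (H ⊗[K] H)).symm.toLinearMap
  have Q_apply : ∀ a₁ a₂ a₃ a₄ : H,
      Q (a₁ ⊗ₜ (a₂ ⊗ₜ (a₃ ⊗ₜ a₄))) = (a₁ * antipode (R := K) a₄) ⊗ₜ[K] (a₂ * antipode (R := K) a₃) := by
    intro a₁ a₂ a₃ a₄
    simp only [Q, LinearMap.coe_comp, Function.comp_apply, LinearEquiv.coe_coe,
      TensorProduct.assoc_symm_tmul, LinearMap.lTensor_tmul]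
    rw [tauSS_tmul]
    rw [LinearMap.mul'_apply, Algebra.TensorProduct.tmul_mul_tmul]
  -- grouping equality via coassociativity
  have E1 := Coalgebra.sum_tmul_tmul_eq r rL rR
  have E2 := congrArg (LinearMap.lTensor H (LinearMap.lTensor H (Coalgebra.comul (R := K)))) E1
  simp only [map_sum, LinearMap.lTensor_tmul] at E2
  -- E2 : ∑ i ∑ k, u ⊗ (v ⊗ Δ(r i)) = ∑ i ∑ j, l i ⊗ (y ⊗ Δ(y'))
  have E3 : ∀ i ∈ r.index,
      ∑ j ∈ (rR i).index, (r.left i) ⊗ₜ[K] ((rR i).left j ⊗ₜ[K]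
          Coalgebra.comul (R := K) ((rR i).right j)) =
      ∑ j ∈ (rR i).index, ∑ m ∈ (rY i j).index,
        (r.left i) ⊗ₜ[K] ((rY i j).left m ⊗ₜ[K] ((rY i j).right m ⊗ₜ[K] (rR i).right j)) := by
    intro i _
    have E := Coalgebra.sum_tmul_tmul_eq (rR i) (rY i) (rY' i)
    have E' := congrArg ((TensorProduct.mk K H (H ⊗[K] (H ⊗[K] H))) (r.left i)) E
    simp only [map_sum, TensorProduct.mk_apply] at E'
    calc ∑ j ∈ (rR i).index, (r.left i) ⊗ₜ[K] ((rR i).left j ⊗ₜ[K]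
            Coalgebra.comul (R := K) ((rR i).right j))
        = ∑ j ∈ (rR i).index, ∑ m ∈ (rY' i j).index,
            (r.left i) ⊗ₜ[K] ((rR i).left j ⊗ₜ[K] ((rY' i j).left m ⊗ₜ[K] (rY' i j).right m)) := by
          refine Finset.sum_congr rfl fun j _ => ?_
          rw [← (rY' i j).eq]
          simp [TensorProduct.tmul_sum]
      _ = _ := E'.symm
  -- hence G_B = G_A
  have EG : ∑ i ∈ r.index, ∑ k ∈ (rL i).index, ∑ j ∈ (rR i).index,
        (rL i).left k ⊗ₜ[K] ((rL i).right k ⊗ₜ[K] ((rR i).left j ⊗ₜ[K] (rR i).right j)) =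
      ∑ i ∈ r.index, ∑ j ∈ (rR i).index, ∑ m ∈ (rY i j).index,
        (r.left i) ⊗ₜ[K] ((rY i j).left m ⊗ₜ[K] ((rY i j).right m ⊗ₜ[K] (rR i).right j)) := by
    calc ∑ i ∈ r.index, ∑ k ∈ (rL i).index, ∑ j ∈ (rR i).index,
          (rL i).left k ⊗ₜ[K] ((rL i).right k ⊗ₜ[K] ((rR i).left j ⊗ₜ[K] (rR i).right j))
        = ∑ i ∈ r.index, ∑ k ∈ (rL i).index,
            (rL i).left k ⊗ₜ[K] ((rL i).right k ⊗ₜ[K]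
              Coalgebra.comul (R := K) (r.right i)) := by
          refine Finset.sum_congr rfl fun i _ => Finset.sum_congr rfl fun k _ => ?_
          rw [← (rR i).eq]
          simp [TensorProduct.tmul_sum]
      _ = ∑ i ∈ r.index, ∑ j ∈ (rR i).index,
            (r.left i) ⊗ₜ[K] ((rR i).left j ⊗ₜ[K]
              Coalgebra.comul (R := K) ((rR i).right j)) := E2
      _ = _ := Finset.sum_congr rfl E3
  have EQ := congrArg Q EG
  simp only [map_sum, Q_apply] at EQ
  -- now compute both sides
  rw [conv_repr _ _ a r, cunit_apply]
  have lhs_eq : ∑ i ∈ r.index,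
      Coalgebra.comul (R := K) (r.left i) *
        ((tauSS (K := K)) ∘ₗ Coalgebra.comul (R := K)) (r.right i) =
      ∑ i ∈ r.index, ∑ k ∈ (rL i).index, ∑ j ∈ (rR i).index,
        ((rL i).left k * antipode (R := K) ((rR i).right j)) ⊗ₜ[K] ((rL i).right k * antipode (R := K) ((rR i).left j)) := by
    refine Finset.sum_congr rfl fun i _ => ?_
    rw [← (rL i).eq]
    have : ((tauSS (K := K)) ∘ₗ Coalgebra.comul (R := K)) (r.right i) =
        ∑ j ∈ (rR i).index, antipode (R := K) ((rR i).right j) ⊗ₜ[K] antipode (R := K) ((rR i).left j) := by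
      simp only [LinearMap.coe_comp, Function.comp_apply, ← (rR i).eq, map_sum, tauSS_tmul]
    rw [this, Finset.sum_mul_sum]
    simp only [Algebra.TensorProduct.tmul_mul_tmul]
  rw [lhs_eq, EQ]
  -- contract the middle pair
  have mid : ∀ i ∈ r.index, ∀ j ∈ (rR i).index,
      ∑ m ∈ (rY i j).index,
        ((r.left i) * antipode (R := K) ((rR i).right j)) ⊗ₜ[K] ((rY i j).left m * antipode (R := K) ((rY i j).right m)) =
      counit (R := K) ((rR i).left j) •
        (((r.left i) * antipode (R := K) ((rR i).right j)) ⊗ₜ[K] (1 : H)) := by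
    intro i _ j _
    rw [← TensorProduct.tmul_sum, HopfAlgebra.sum_mul_antipode_eq_smul (rY i j),
      TensorProduct.tmul_smul]
  calc ∑ i ∈ r.index, ∑ j ∈ (rR i).index, ∑ m ∈ (rY i j).index,
        ((r.left i) * antipode (R := K) ((rR i).right j)) ⊗ₜ[K] ((rY i j).left m * antipode (R := K) ((rY i j).right m))
      = ∑ i ∈ r.index, ∑ j ∈ (rR i).index,
          ((r.left i) * antipode (R := K) (counit (R := K) ((rR i).left j) • (rR i).right j)) ⊗ₜ[K] (1 : H) := by
        refine Finset.sum_congr rfl fun i hi => Finset.sum_congr rfl fun j hj => ?_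
        rw [mid i hi j hj]
        rw [map_smul, mul_smul_comm, ← TensorProduct.smul_tmul']
    _ = ∑ i ∈ r.index, ((r.left i) * antipode (R := K) (r.right i)) ⊗ₜ[K] (1 : H) := by
        refine Finset.sum_congr rfl fun i hi => ?_
        have h1 : ∑ j ∈ (rR i).index,
            counit (R := K) ((rR i).left j) • (rR i).right j = r.right i := by
          have h := Coalgebra.sum_counit_tmul_eq (R := K) (rR i)
          have h2 := congrArg (TensorProduct.lid K H) h
          simp only [map_sum, TensorProduct.lid_tmul] at h2
          simpa using h2
        let L : H →ₗ[K] H ⊗[K] H :=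
          ((TensorProduct.mk K H H).flip 1) ∘ₗ
            (LinearMap.mulLeft K (r.left i)) ∘ₗ (antipode (R := K) : H →ₗ[K] H)
        have hL : ∀ z : H, L z = ((r.left i) * antipode (R := K) z) ⊗ₜ[K] (1 : H) := fun z => rfl
        calc ∑ j ∈ (rR i).index,
              ((r.left i) * antipode (R := K)
                (counit (R := K) ((rR i).left j) • (rR i).right j)) ⊗ₜ[K] (1 : H)
            = ∑ j ∈ (rR i).index, L (counit (R := K) ((rR i).left j) • (rR i).right j) := by
              simp only [hL]
          _ = L (r.right i) := by rw [← map_sum, h1]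
          _ = _ := hL _
    _ = counit (R := K) a • (1 : H ⊗[K] H) := by
        rw [← TensorProduct.sum_tmul, HopfAlgebra.sum_mul_antipode_eq_smul r,
          Algebra.TensorProduct.one_def, TensorProduct.smul_tmul']

end KoszulAux

namespace KoszulAux

variable {K : Type*} [Field K] {H : Type*} [Ring H] [HopfAlgebra K H]

open HopfAlgebra

/-- The antipode is an anti-coalgebra morphism: `Δ ∘ S = τ ∘ (S ⊗ S) ∘ Δ`. -/
lemma comul_antipode' :
    (Coalgebra.comul ∘ₗ antipode (R := K) : H →ₗ[K] H ⊗[K] H) =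
      (tauSS (K := K)) ∘ₗ Coalgebra.comul := by
  have h1 : conv K H (Coalgebra.comul ∘ₗ antipode (R := K)) Coalgebra.comul = cunit :=
    conv_deltaS_delta
  have h2 : conv K H Coalgebra.comul ((tauSS (K := K)) ∘ₗ Coalgebra.comul) = cunit :=
    conv_delta_tauSS
  calc (Coalgebra.comul ∘ₗ antipode (R := K) : H →ₗ[K] H ⊗[K] H)
      = conv K H (Coalgebra.comul ∘ₗ antipode (R := K))
          (conv K H Coalgebra.comul ((tauSS (K := K)) ∘ₗ Coalgebra.comul)) := by
        rw [h2, conv_unit_right]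
    _ = conv K H (conv K H (Coalgebra.comul ∘ₗ antipode (R := K)) Coalgebra.comul)
          ((tauSS (K := K)) ∘ₗ Coalgebra.comul) := (conv_assoc _ _ _).symm
    _ = (tauSS (K := K)) ∘ₗ Coalgebra.comul := by rw [h1, conv_unit_left]

lemma comul_antipode (h : H) :
    Coalgebra.comul (R := K) (antipode (R := K) h) =
      (tauSS (K := K)) (Coalgebra.comul (R := K) h) :=
  congrFun (congrArg DFunLike.coe (comul_antipode' (K := K) (H := H))) h

end KoszulAux

open TensorProduct

/-- Let `H` be a Hopf algebra over `K` acting on `V` via `ρ`, with `I ⊆ V ⊗ V` an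
`H`-submodule (the relations of a quadratic `H`-module algebra `A = T(V)/(I)`), and
let `actD` be the contragredient action `(h·φ)(v) = φ(S(h)·v)` on `V*`. If for every
Sweedler decomposition `Δ(h) = ∑ h₁ ⊗ h₂` one has
`∑ (h₂·φ) ⊗ (h₁·ψ) = ∑ (h₁·φ) ⊗ (h₂·ψ)` in `V* ⊗ V*`, then the orthogonal complement
`I^⊥ = {f : f(r) = 0 for all r ∈ I}` is stable under the `H`-action
`h·f = ∑ (h₁·) ⊗ (h₂·) f`; in particular the Koszul dual `A^! = T(V*)/(I^⊥)` is an
`H`-module algebra. -/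
theorem koszul_dual_perp_stable (K : Type*) [Field K]
    (H : Type*) [Ring H] [HopfAlgebra K H]
    (V : Type*) [AddCommGroup V] [Module K V] [FiniteDimensional K V]
    (ρ : H →ₐ[K] Module.End K V)
    (I : Submodule K (V ⊗[K] V))
    (actD : H → Module.Dual K V →ₗ[K] Module.Dual K V)
    (hactD : ∀ (h : H) (φ : Module.Dual K V) (v : V),
      actD h φ v = φ (ρ (HopfAlgebra.antipode (R := K) h) v))
    (hI : ∀ (h : H) (ι : Type) (s : Finset ι) (h₁ h₂ : ι → H),
      Coalgebra.comul (R := K) h = ∑ i ∈ s, h₁ i ⊗ₜ[K] h₂ i →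
      ∀ r ∈ I, (∑ i ∈ s, TensorProduct.map (ρ (h₁ i)) (ρ (h₂ i))) r ∈ I)
    (hsym : ∀ (h : H) (ι : Type) (s : Finset ι) (h₁ h₂ : ι → H),
      Coalgebra.comul (R := K) h = ∑ i ∈ s, h₁ i ⊗ₜ[K] h₂ i →
      ∀ φ ψ : Module.Dual K V,
        ∑ i ∈ s, (actD (h₂ i) φ) ⊗ₜ[K] (actD (h₁ i) ψ) =
          ∑ i ∈ s, (actD (h₁ i) φ) ⊗ₜ[K] (actD (h₂ i) ψ)) :
    ∀ f : Module.Dual K V ⊗[K] Module.Dual K V,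
      (∀ r ∈ I, TensorProduct.dualDistrib K V V f r = 0) →
      ∀ (h : H) (ι : Type) (s : Finset ι) (h₁ h₂ : ι → H),
        Coalgebra.comul (R := K) h = ∑ i ∈ s, h₁ i ⊗ₜ[K] h₂ i →
        ∀ r ∈ I,
          TensorProduct.dualDistrib K V V
            ((∑ i ∈ s, TensorProduct.map (actD (h₁ i)) (actD (h₂ i))) f) r = 0 := by
  intro f hf h ι s h₁ h₂ hcomul r hr
  classical
  have pair : ∀ (a b : H) (g : Module.Dual K V ⊗[K] Module.Dual K V) (x : V ⊗[K] V),
      TensorProduct.dualDistrib K V V (TensorProduct.map (actD a) (actD b) g) x =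
        TensorProduct.dualDistrib K V V g
          (TensorProduct.map (ρ (HopfAlgebra.antipode (R := K) a))
            (ρ (HopfAlgebra.antipode (R := K) b)) x) := by
    intro a b g x
    induction g using TensorProduct.induction_on with
    | zero => simp
    | tmul φ ψ =>
      induction x using TensorProduct.induction_on with
      | zero => simp
      | tmul v w => simp [TensorProduct.dualDistrib_apply, hactD]
      | add x y hx hy => simp only [map_add, hx, hy]
    | add g₁ g₂ hg₁ hg₂ => simp only [map_add, LinearMap.add_apply, hg₁, hg₂]
  have hswap : ∀ g : Module.Dual K V ⊗[K] Module.Dual K V,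
      (∑ i ∈ s, TensorProduct.map (actD (h₁ i)) (actD (h₂ i))) g =
        (∑ i ∈ s, TensorProduct.map (actD (h₂ i)) (actD (h₁ i))) g := by
    intro g
    induction g using TensorProduct.induction_on with
    | zero => simp
    | tmul φ ψ =>
      simpa only [LinearMap.sum_apply, TensorProduct.map_tmul] using
        (hsym h ι s h₁ h₂ hcomul φ ψ).symm
    | add a b ha hb => simp only [map_add, ha, hb]
  let Θ : H ⊗[K] H →ₗ[K] (V ⊗[K] V →ₗ[K] V ⊗[K] V) :=
    TensorProduct.homTensorHomMap (RingHom.id K) V V V V ∘ₗ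
      TensorProduct.map ρ.toLinearMap ρ.toLinearMap
  have Θ_apply : ∀ a b : H, Θ (a ⊗ₜ[K] b) = TensorProduct.map (ρ a) (ρ b) := by
    intro a b
    simp [Θ, TensorProduct.homTensorHomMap_apply]
  obtain ⟨T, hT⟩ := TensorProduct.exists_finset (R := K)
    (Coalgebra.comul (R := K) (HopfAlgebra.antipode (R := K) h))
  set n := T.card with hn
  set e := T.equivFin with he
  set k₁ : Fin n → H := fun i => (e.symm i : H × H).1 with hk₁
  set k₂ : Fin n → H := fun i => (e.symm i : H × H).2 with hk₂
  have hdecomp : Coalgebra.comul (R := K) (HopfAlgebra.antipode (R := K) h) =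
      ∑ i ∈ (Finset.univ : Finset (Fin n)), k₁ i ⊗ₜ[K] k₂ i := by
    have heq := Fintype.sum_equiv e (fun p => (p : H × H).1 ⊗ₜ[K] (p : H × H).2)
      (fun i => k₁ i ⊗ₜ[K] k₂ i) (fun p => by simp [hk₁, hk₂])
    rw [hT, ← Finset.sum_coe_sort T (fun p => p.1 ⊗ₜ[K] p.2), heq]
  have hmem := hI (HopfAlgebra.antipode (R := K) h) (Fin n) Finset.univ k₁ k₂ hdecomp r hr
  have hop : (∑ i ∈ s, TensorProduct.map (ρ (HopfAlgebra.antipode (R := K) (h₂ i)))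
        (ρ (HopfAlgebra.antipode (R := K) (h₁ i)))) =
      ∑ i ∈ (Finset.univ : Finset (Fin n)), TensorProduct.map (ρ (k₁ i)) (ρ (k₂ i)) := by
    have e3 : ∑ i ∈ s, (HopfAlgebra.antipode (R := K) (h₂ i)) ⊗ₜ[K]
        (HopfAlgebra.antipode (R := K) (h₁ i)) =
        Coalgebra.comul (R := K) (HopfAlgebra.antipode (R := K) h) := by
      rw [KoszulAux.comul_antipode (K := K) h, hcomul, map_sum]
      exact Finset.sum_congr rfl fun i _ => (KoszulAux.tauSS_tmul _ _).symm
    calc (∑ i ∈ s, TensorProduct.map (ρ (HopfAlgebra.antipode (R := K) (h₂ i)))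
            (ρ (HopfAlgebra.antipode (R := K) (h₁ i))))
        = Θ (∑ i ∈ s, (HopfAlgebra.antipode (R := K) (h₂ i)) ⊗ₜ[K]
            (HopfAlgebra.antipode (R := K) (h₁ i))) := by
          rw [map_sum]
          exact Finset.sum_congr rfl fun i _ => (Θ_apply _ _).symm
      _ = Θ (∑ i ∈ (Finset.univ : Finset (Fin n)), k₁ i ⊗ₜ[K] k₂ i) := by
          rw [e3, hdecomp]
      _ = ∑ i ∈ (Finset.univ : Finset (Fin n)), TensorProduct.map (ρ (k₁ i)) (ρ (k₂ i)) := by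
          rw [map_sum]
          exact Finset.sum_congr rfl fun i _ => Θ_apply _ _
  calc TensorProduct.dualDistrib K V V
        ((∑ i ∈ s, TensorProduct.map (actD (h₁ i)) (actD (h₂ i))) f) r
      = TensorProduct.dualDistrib K V V
          ((∑ i ∈ s, TensorProduct.map (actD (h₂ i)) (actD (h₁ i))) f) r := by rw [hswap f]
    _ = ∑ i ∈ s, TensorProduct.dualDistrib K V V
          (TensorProduct.map (actD (h₂ i)) (actD (h₁ i)) f) r := by
        simp only [LinearMap.sum_apply, map_sum, LinearMap.coe_sum, Finset.sum_apply]
    _ = ∑ i ∈ s, TensorProduct.dualDistrib K V V f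
          (TensorProduct.map (ρ (HopfAlgebra.antipode (R := K) (h₂ i)))
            (ρ (HopfAlgebra.antipode (R := K) (h₁ i))) r) := by
        exact Finset.sum_congr rfl fun i _ => pair _ _ f r
    _ = TensorProduct.dualDistrib K V V f
          ((∑ i ∈ s, TensorProduct.map (ρ (HopfAlgebra.antipode (R := K) (h₂ i)))
            (ρ (HopfAlgebra.antipode (R := K) (h₁ i)))) r) := by
        simp only [LinearMap.sum_apply, map_sum]
    _ = 0 := by
        rw [hop]
        exact hf _ hmem
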